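/- (Bollobás's theorem, symmetric version) If A_1,...,A_h are r-element sets and B_1,...,B_h are s-element sets such that A_i ∩ B_j = ∅ if and only if i = j, then h ≤ C(r+s, r). -/

import Mathlib

namespace BollobasAux
variable {n : ℕ}

def sortInner (r s : ℕ) (S T : Finset (Fin n)) (hTS : T ⊆ S) (hS : S.card = r + s)
    (hT : T.card = r) (hD : (S \ T).card = s) : {x : Fin n // x ∈ S} ≃ {x : Fin n // x ∈ S} :=
  (Equiv.subtypeEquivRight (fun x => by rw [Finset.union_sdiff_of_subset hTS])).symm.trans <|
  ((Equiv.Finset.union T (S \ T) Finset.disjoint_sdiff).symm.trans <|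
  (((T.orderIsoOfFin hT).toEquiv.symm.sumCongr ((S \ T).orderIsoOfFin hD).toEquiv.symm).trans <|
  (finSumFinEquiv.trans (S.orderIsoOfFin hS).toEquiv)))

lemma sortInner_apply_left (r s : ℕ) (S T : Finset (Fin n)) (hTS : T ⊆ S) (hS : S.card = r + s)
    (hT : T.card = r) (hD : (S \ T).card = s) (x : Fin n) (hx : x ∈ T) :
    sortInner r s S T hTS hS hT hD ⟨x, hTS hx⟩ =
      (S.orderIsoOfFin hS) (Fin.castAdd s ((T.orderIsoOfFin hT).symm ⟨x, hx⟩)) := by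
  have h1 : (Equiv.Finset.union T (S \ T) Finset.disjoint_sdiff).symm
      ⟨x, Finset.mem_union.mpr (Or.inl hx)⟩ = Sum.inl ⟨x, hx⟩ := by
    rw [Equiv.symm_apply_eq]; rfl
  simp [sortInner, Equiv.trans_apply, Equiv.subtypeEquivRight, h1]
  erw [h1]; rfl

lemma sortInner_apply_right (r s : ℕ) (S T : Finset (Fin n)) (hTS : T ⊆ S) (hS : S.card = r + s)
    (hT : T.card = r) (hD : (S \ T).card = s) (x : Fin n) (hx : x ∈ S \ T) :
    sortInner r s S T hTS hS hT hD ⟨x, (Finset.sdiff_subset) hx⟩ =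
      (S.orderIsoOfFin hS) (Fin.natAdd r ((S \ T).orderIsoOfFin hD |>.symm ⟨x, hx⟩)) := by
  have h1 : (Equiv.Finset.union T (S \ T) Finset.disjoint_sdiff).symm
      ⟨x, Finset.mem_union.mpr (Or.inr hx)⟩ = Sum.inr ⟨x, hx⟩ := by
    rw [Equiv.symm_apply_eq]; rfl
  simp [sortInner, Equiv.trans_apply, Equiv.subtypeEquivRight, h1]
  erw [h1]; rfl

def sortPerm (r s : ℕ) (S T : Finset (Fin n)) (hTS : T ⊆ S) (hS : S.card = r + s)
    (hT : T.card = r) (hD : (S \ T).card = s) : Equiv.Perm (Fin n) :=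
  Equiv.Perm.subtypeCongr (p := fun x => x ∈ S) (sortInner r s S T hTS hS hT hD) (Equiv.refl _)

lemma sortPerm_congr (r s : ℕ) (S₁ S₂ T₁ T₂ : Finset (Fin n)) (hS12 : S₁ = S₂) (hT12 : T₁ = T₂)
    (hTS₁ : T₁ ⊆ S₁) (hS₁ : S₁.card = r + s) (hT₁ : T₁.card = r) (hD₁ : (S₁ \ T₁).card = s)
    (hTS₂ : T₂ ⊆ S₂) (hS₂ : S₂.card = r + s) (hT₂ : T₂.card = r) (hD₂ : (S₂ \ T₂).card = s) :
    sortPerm r s S₁ T₁ hTS₁ hS₁ hT₁ hD₁ = sortPerm r s S₂ T₂ hTS₂ hS₂ hT₂ hD₂ := by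
  subst hS12; subst hT12; rfl

lemma sortPerm_apply_mem (r s : ℕ) (S T : Finset (Fin n)) (hTS : T ⊆ S) (hS : S.card = r + s)
    (hT : T.card = r) (hD : (S \ T).card = s) (x : Fin n) (hx : x ∈ S) :
    sortPerm r s S T hTS hS hT hD x = ↑(sortInner r s S T hTS hS hT hD ⟨x, hx⟩) :=
  Equiv.Perm.subtypeCongr.left_apply _ _ hx

lemma sortPerm_mem (r s : ℕ) (S T : Finset (Fin n)) (hTS : T ⊆ S) (hS : S.card = r + s)
    (hT : T.card = r) (hD : (S \ T).card = s) (x : Fin n) (hx : x ∈ S) :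
    sortPerm r s S T hTS hS hT hD x ∈ S := by
  rw [sortPerm_apply_mem r s S T hTS hS hT hD x hx]
  exact (sortInner r s S T hTS hS hT hD ⟨x, hx⟩).2

lemma sortPerm_lt (r s : ℕ) (S T : Finset (Fin n)) (hTS : T ⊆ S) (hS : S.card = r + s)
    (hT : T.card = r) (hD : (S \ T).card = s) (x y : Fin n) (hx : x ∈ T) (hy : y ∈ S \ T) :
    sortPerm r s S T hTS hS hT hD x < sortPerm r s S T hTS hS hT hD y := by
  rw [sortPerm_apply_mem r s S T hTS hS hT hD x (hTS hx),
    sortPerm_apply_mem r s S T hTS hS hT hD y (Finset.sdiff_subset hy)]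
  have e1 := sortInner_apply_left r s S T hTS hS hT hD x hx
  have e2 := sortInner_apply_right r s S T hTS hS hT hD y hy
  rw [e1, e2]
  have : (Fin.castAdd s ((T.orderIsoOfFin hT).symm ⟨x, hx⟩) : Fin (r + s)) <
      Fin.natAdd r ((S \ T).orderIsoOfFin hD |>.symm ⟨y, hy⟩) := by
    simp only [Fin.lt_def, Fin.coe_castAdd, Fin.coe_natAdd]
    exact lt_of_lt_of_le (Fin.is_lt _) (Nat.le_add_right r _)
  exact (S.orderIsoOfFin hS).strictMono this

end BollobasAux

open Finset BollobasAux in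
lemma bollobas_fin (n h r s : ℕ) (A B : Fin h → Finset (Fin n))
    (hA : ∀ i, (A i).card = r) (hB : ∀ i, (B i).card = s)
    (hiff : ∀ i j, A i ∩ B j = ∅ ↔ i = j) :
    h ≤ (r + s).choose r := by
  classical
  set E : Fin h → Finset (Equiv.Perm (Fin n)) :=
    fun i => univ.filter (fun f => ∀ a ∈ A i, ∀ b ∈ B i, f a < f b) with hE
  -- disjointness of the A i and B i
  have hd : ∀ i, Disjoint (A i) (B i) := fun i =>
    Finset.disjoint_iff_inter_eq_empty.mpr ((hiff i i).mpr rfl)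
  -- key counting bound
  have key : ∀ i, (univ : Finset (Equiv.Perm (Fin n))).card ≤ (E i).card * (r + s).choose r := by
    intro i
    set Sf : Equiv.Perm (Fin n) → Finset (Fin n) := fun f => (A i ∪ B i).image f with hSf
    set Tf : Equiv.Perm (Fin n) → Finset (Fin n) := fun f => (A i).image f with hTf
    have hTS : ∀ f, Tf f ⊆ Sf f := fun f =>
      Finset.image_subset_image Finset.subset_union_left
    have hScard : ∀ f, (Sf f).card = r + s := by
      intro f
      simp only [hSf]
      rw [Finset.card_image_of_injective _ f.injective, Finset.card_union_of_disjoint (hd i),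
        hA i, hB i]
    have hTcard : ∀ f, (Tf f).card = r := by
      intro f
      simp only [hTf]; rw [Finset.card_image_of_injective _ f.injective, hA i]
    have hDeq : ∀ f, Sf f \ Tf f = (B i).image f := by
      intro f
      simp only [hSf, hTf, Finset.image_union]
      exact Finset.union_sdiff_cancel_left
        ((Finset.disjoint_image f.injective).mpr (hd i))
    have hDcard : ∀ f, (Sf f \ Tf f).card = s := by
      intro f
      rw [hDeq f, Finset.card_image_of_injective _ f.injective, hB i]
    -- the sorting map
    set Ψ : Equiv.Perm (Fin n) → Equiv.Perm (Fin n) :=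
      fun f => f.trans (sortPerm r s (Sf f) (Tf f) (hTS f) (hScard f) (hTcard f) (hDcard f))
      with hΨ
    set t : Finset (Σ _ : Equiv.Perm (Fin n), Finset (Fin n)) :=
      (E i).sigma (fun g => ((A i ∪ B i).image ⇑g).powersetCard r) with ht
    -- image of A i ∪ B i under Ψ f is Sf f
    have himg : ∀ f, (A i ∪ B i).image ⇑(Ψ f) = Sf f := by
      intro f
      have h1 : (A i ∪ B i).image ⇑(Ψ f) = (Sf f).image
          ⇑(sortPerm r s (Sf f) (Tf f) (hTS f) (hScard f) (hTcard f) (hDcard f)) := by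
        simp only [hSf, hΨ]
        rw [Finset.image_image]
        rfl
      rw [h1]
      apply Finset.eq_of_subset_of_card_le
      · intro x hx
        obtain ⟨y, hy, rfl⟩ := Finset.mem_image.mp hx
        exact sortPerm_mem r s _ _ _ _ _ _ y hy
      · exact (Finset.card_image_of_injective _ (Equiv.injective _)).ge
    have hmem : ∀ f ∈ (univ : Finset (Equiv.Perm (Fin n))),
        (⟨Ψ f, Tf f⟩ : Σ _ : Equiv.Perm (Fin n), Finset (Fin n)) ∈ t := by
      intro f _
      rw [ht, Finset.mem_sigma]
      constructor
      · rw [hE, Finset.mem_filter]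
        refine ⟨Finset.mem_univ _, fun a ha b hb => ?_⟩
        have hfa : f a ∈ Tf f := Finset.mem_image_of_mem f ha
        have hfb : f b ∈ Sf f \ Tf f := by
          rw [hDeq f]; exact Finset.mem_image_of_mem f hb
        exact sortPerm_lt r s _ _ _ _ _ _ _ _ hfa hfb
      · rw [Finset.mem_powersetCard, himg f]
        exact ⟨hTS f, hTcard f⟩
    have hinj : Set.InjOn (fun f => (⟨Ψ f, Tf f⟩ : Σ _ : Equiv.Perm (Fin n), Finset (Fin n)))
        (univ : Finset (Equiv.Perm (Fin n))) := by
      intro f₁ _ f₂ _ heq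
      simp only [Sigma.mk.inj_iff, heq_eq_eq] at heq
      obtain ⟨hg, hT12⟩ := heq
      have hS12 : Sf f₁ = Sf f₂ := by
        rw [← himg f₁, ← himg f₂, hg]
      have hπ : sortPerm r s (Sf f₁) (Tf f₁) (hTS f₁) (hScard f₁) (hTcard f₁) (hDcard f₁) =
          sortPerm r s (Sf f₂) (Tf f₂) (hTS f₂) (hScard f₂) (hTcard f₂) (hDcard f₂) :=
        sortPerm_congr r s _ _ _ _ hS12 hT12 _ _ _ _ _ _ _ _
      have : ∀ x, f₁ x = f₂ x := by
        intro x
        have h1 : (Ψ f₁) x = (Ψ f₂) x := by rw [hg]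
        simp only [hΨ, Equiv.trans_apply, hπ] at h1
        exact (Equiv.injective _) h1
      exact Equiv.ext this
    calc (univ : Finset (Equiv.Perm (Fin n))).card ≤ t.card :=
          Finset.card_le_card_of_injOn _ hmem hinj
      _ = (E i).card * (r + s).choose r := by
          rw [ht, Finset.card_sigma]
          rw [Finset.sum_congr rfl (fun g hg => ?_), Finset.sum_const, smul_eq_mul]
          rw [Finset.card_powersetCard]
          congr 1
          rw [Finset.card_image_of_injective _ g.injective,
            Finset.card_union_of_disjoint (hd i), hA i, hB i]
  -- the E i are pairwise disjoint
  have hdisj : ∀ i ∈ (univ : Finset (Fin h)), ∀ j ∈ univ, i ≠ j → Disjoint (E i) (E j) := by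
    intro i _ j _ hij
    rw [Finset.disjoint_left]
    intro f hfi hfj
    have hx : (A i ∩ B j).Nonempty := Finset.nonempty_iff_ne_empty.mpr
      (fun hc => hij ((hiff i j).mp hc))
    have hy : (A j ∩ B i).Nonempty := Finset.nonempty_iff_ne_empty.mpr
      (fun hc => hij ((hiff j i).mp hc).symm)
    obtain ⟨x, hx⟩ := hx
    obtain ⟨y, hy⟩ := hy
    rw [Finset.mem_inter] at hx hy
    rw [hE, Finset.mem_filter] at hfi hfj
    have h1 := hfi.2 x hx.1 y hy.2
    have h2 := hfj.2 y hy.1 x hx.2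
    exact absurd (h1.trans h2) (lt_irrefl _)
  have hsum : ∑ i, (E i).card ≤ (univ : Finset (Equiv.Perm (Fin n))).card := by
    rw [← Finset.card_biUnion hdisj]
    exact Finset.card_le_card (Finset.subset_univ _)
  have hfinal : h * (univ : Finset (Equiv.Perm (Fin n))).card ≤
      (r + s).choose r * (univ : Finset (Equiv.Perm (Fin n))).card := by
    calc h * (univ : Finset (Equiv.Perm (Fin n))).card
        = ∑ _i : Fin h, (univ : Finset (Equiv.Perm (Fin n))).card := by
          rw [Finset.sum_const, smul_eq_mul, Finset.card_fin]
      _ ≤ ∑ i, (E i).card * (r + s).choose r := Finset.sum_le_sum (fun i _ => key i)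
      _ = (∑ i, (E i).card) * (r + s).choose r := by rw [Finset.sum_mul]
      _ ≤ (univ : Finset (Equiv.Perm (Fin n))).card * (r + s).choose r :=
          Nat.mul_le_mul_right _ hsum
      _ = (r + s).choose r * (univ : Finset (Equiv.Perm (Fin n))).card := mul_comm _ _
  exact Nat.le_of_mul_le_mul_right hfinal (Finset.card_pos.mpr Finset.univ_nonempty)

/-- Bollobás's theorem, symmetric version. -/
theorem bollobas_symmetric {α : Type*} [DecidableEq α] (h r s : ℕ)
    (A B : Fin h → Finset α)
    (hA : ∀ i, (A i).card = r) (hB : ∀ i, (B i).card = s)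
    (hiff : ∀ i j, A i ∩ B j = ∅ ↔ i = j) :
    h ≤ (r + s).choose r := by
  classical
  set U : Finset α := Finset.univ.biUnion (fun i => A i ∪ B i) with hU
  have hsubU : ∀ i, A i ∪ B i ⊆ U := by
    intro i; rw [hU]; exact Finset.subset_biUnion_of_mem (fun i => A i ∪ B i) (Finset.mem_univ i)
  set m : ℕ := U.card with hm
  set e : {x : α // x ∈ U} ≃ Fin m := U.equivFin with he
  set φ : α → Fin (m + 1) := fun x => if hx : x ∈ U then (e ⟨x, hx⟩).castSucc else Fin.last m
    with hφ
  have hφinj : Set.InjOn φ U := by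
    intro x hx y hy hxy
    simp only [hφ] at hxy
    rw [dif_pos (Finset.mem_coe.mp hx), dif_pos (Finset.mem_coe.mp hy)] at hxy
    have := Fin.castSucc_injective _ hxy
    exact Subtype.ext_iff.mp (e.injective this)
  have hAU : ∀ i, ↑(A i) ⊆ (U : Set α) := fun i x hx =>
    hsubU i (Finset.mem_union_left _ hx)
  have hBU : ∀ i, ↑(B i) ⊆ (U : Set α) := fun i x hx =>
    hsubU i (Finset.mem_union_right _ hx)
  refine bollobas_fin (m + 1) h r s (fun i => (A i).image φ) (fun i => (B i).image φ)
    (fun i => ?_) (fun i => ?_) (fun i j => ?_)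
  · rw [Finset.card_image_of_injOn (hφinj.mono (hAU i)), hA i]
  · rw [Finset.card_image_of_injOn (hφinj.mono (hBU i)), hB i]
  · rw [← Finset.image_inter_of_injOn _ _
      (hφinj.mono (Set.union_subset (hAU i) (hBU j)))]
    rw [Finset.image_eq_empty]
    exact hiff i j
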